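/- Let λ > 0, z > 0, and let σ have density λ·p(r,z,λr) on (0,∞). For y ≥ 0, define G(y) = λ·∫_0^∞ exp(−(y² + 2yz)/(2r))·p(r, z, λr) dr. Then G(y) = exp(−λy); that is, the law with tail function G is the exponential distribution with rate λ. -/

import Mathlib

open MeasureTheory Real Set

/-- Gaussian density with variance `t` and mean `m`, evaluated at `x`. -/
noncomputable def gaussDensity (t x m : ℝ) : ℝ :=
  Real.exp (-(x - m) ^ 2 / (2 * t)) / Real.sqrt (2 * Real.pi * t)

-- Glasser-type lemma
lemma glasser (a b : ℝ) (ha : 0 < a) (hb : 0 < b) :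
    ∫ s in Set.Ioi (0:ℝ), Real.exp (-(b*s - a/s)^2 / 2)
      = Real.sqrt (2*Real.pi) / (2*b) := by
  set c := a / b with hc_def
  have hc : 0 < c := div_pos ha hb
  set g : ℝ → ℝ := fun s => s - c * s⁻¹ with hg_def
  set g' : ℝ → ℝ := fun s => 1 + c * (s^2)⁻¹ with hg'_def
  have hderiv : ∀ s ∈ Set.Ioi (0:ℝ), HasDerivWithinAt g (g' s) (Set.Ioi 0) s := by
    intro s hs
    have hs0 : s ≠ 0 := ne_of_gt hs
    have : HasDerivAt g (1 - c * (-(s^2)⁻¹)) s :=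
      (hasDerivAt_id s).sub (((hasDerivAt_inv hs0)).const_mul c)
    have h2 : (1 : ℝ) - c * (-(s^2)⁻¹) = g' s := by simp only [hg'_def]; ring
    exact (h2 ▸ this).hasDerivWithinAt
  have hinj : Set.InjOn g (Set.Ioi 0) := by
    intro s hs t ht h
    simp only [hg_def] at h
    have hs0 : (0:ℝ) < s := hs
    have ht0 : (0:ℝ) < t := ht
    have : (s - t) * (1 + c / (s*t)) = 0 := by field_simp at h ⊢; nlinarith [h]
    have hpos : 0 < 1 + c / (s*t) := by positivity
    have := mul_eq_zero.mp this
    rcases this with h1 | h1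
    · linarith
    · linarith
  have himg : g '' Set.Ioi 0 = Set.univ := by
    apply Set.eq_univ_of_forall
    intro w
    set D := Real.sqrt (w^2 + 4*c) with hD
    have hD2 : D^2 = w^2 + 4*c := Real.sq_sqrt (by positivity)
    have hD0 : 0 ≤ D := Real.sqrt_nonneg _
    have hspos : 0 < (w + D)/2 := by nlinarith
    refine ⟨(w + D)/2, hspos, ?_⟩
    have hne2 : w + D ≠ 0 := by intro h; rw [show D = -w by linarith] at hD0; nlinarith
    simp only [hg_def]
    field_simp
    nlinarith [hD2]
  have key := integral_image_eq_integral_abs_deriv_smul measurableSet_Ioi hderiv hinj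
    (fun w => Real.exp (-(b*w)^2 / 2))
  rw [himg, MeasureTheory.setIntegral_univ] at key
  -- LHS of key : gaussian integral
  have hgauss : (∫ w : ℝ, Real.exp (-(b*w)^2 / 2)) = Real.sqrt (2*Real.pi) / b := by
    have : ∀ w : ℝ, Real.exp (-(b*w)^2 / 2) = Real.exp (-(b^2/2) * w^2) := by
      intro w; congr 1; ring
    rw [funext this, integral_gaussian]
    rw [show Real.pi / (b^2/2) = (2*Real.pi) * (b⁻¹)^2 by field_simp]
    rw [Real.sqrt_mul (by positivity), Real.sqrt_sq (by positivity)]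
    rw [inv_eq_one_div]; ring
  rw [hgauss] at key
  -- integrand rewrite on RHS of key
  have habs : ∀ s ∈ Set.Ioi (0:ℝ),
      |g' s| • Real.exp (-(b * g s)^2 / 2)
        = (1 + c * (s^2)⁻¹) * Real.exp (-(b*s - a/s)^2 / 2) := by
    intro s hs
    have hs0 : (0:ℝ) < s := hs
    have h1 : |g' s| = 1 + c * (s^2)⁻¹ := by
      rw [abs_of_pos]; positivity
    have h2 : b * g s = b*s - a/s := by
      simp only [hg_def, hc_def]
      field_simp
    rw [smul_eq_mul, h1, h2]
  rw [MeasureTheory.setIntegral_congr_fun measurableSet_Ioi habs] at key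
  -- integrability
  have hintsum : IntegrableOn
      (fun s => (1 + c * (s^2)⁻¹) * Real.exp (-(b*s - a/s)^2 / 2)) (Set.Ioi 0) := by
    have := (integrableOn_image_iff_integrableOn_abs_deriv_smul measurableSet_Ioi hderiv hinj
      (fun w => Real.exp (-(b*w)^2 / 2))).mp
    rw [himg] at this
    have hg2 : IntegrableOn (fun w => Real.exp (-(b*w)^2 / 2)) Set.univ := by
      rw [MeasureTheory.integrableOn_univ]
      have h0 : Integrable (fun w : ℝ => Real.exp (-(b^2/2) * w^2)) :=
        integrable_exp_neg_mul_sq (by positivity)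
      have heq : (fun w : ℝ => Real.exp (-(b^2/2) * w^2))
          = fun w => Real.exp (-(b*w)^2 / 2) := by
        funext w; congr 1; ring
      rw [← heq]
      exact h0
    have h3 := this hg2
    exact h3.congr_fun habs measurableSet_Ioi
  have hmeas : AEStronglyMeasurable (fun s : ℝ => Real.exp (-(b*s - a/s)^2 / 2))
      (volume.restrict (Set.Ioi 0)) := by
    apply Measurable.aestronglyMeasurable
    have m1 : Measurable fun s : ℝ => b*s - a/s := by
      have : Measurable fun s : ℝ => a / s := by
        simp only [div_eq_mul_inv]
        exact measurable_inv.const_mul a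
      exact (measurable_id.const_mul b).sub this
    exact Real.measurable_exp.comp ((m1.pow_const 2).neg.div_const 2)
  have hintf : IntegrableOn (fun s => Real.exp (-(b*s - a/s)^2 / 2)) (Set.Ioi 0) := by
    refine hintsum.mono' hmeas ?_
    filter_upwards [MeasureTheory.ae_restrict_mem measurableSet_Ioi] with s hs
    have hs0 : (0:ℝ) < s := hs
    rw [Real.norm_eq_abs, abs_of_pos (Real.exp_pos _)]
    have h1 : (1:ℝ) ≤ 1 + c * (s^2)⁻¹ := by
      have : 0 < c * (s^2)⁻¹ := by positivity
      linarith
    nlinarith [Real.exp_pos (-(b*s - a/s)^2 / 2)]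
  have hintf2 : IntegrableOn (fun s => (c * (s^2)⁻¹) * Real.exp (-(b*s - a/s)^2 / 2))
      (Set.Ioi 0) := by
    refine MeasureTheory.IntegrableOn.congr_fun (hintsum.sub hintf)
      (fun s hs => ?_) measurableSet_Ioi
    simp only [Pi.sub_apply]
    ring
  -- second substitution: h s = c * s⁻¹
  have hJ2 : (∫ s in Set.Ioi (0:ℝ), (c * (s^2)⁻¹) * Real.exp (-(b*s - a/s)^2 / 2))
      = ∫ s in Set.Ioi (0:ℝ), Real.exp (-(b*s - a/s)^2 / 2) := by
    have hderiv2 : ∀ s ∈ Set.Ioi (0:ℝ),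
        HasDerivWithinAt (fun s : ℝ => c * s⁻¹) (c * (-(s^2)⁻¹)) (Set.Ioi 0) s := by
      intro s hs
      exact (((hasDerivAt_inv (ne_of_gt hs))).const_mul c).hasDerivWithinAt
    have hinj2 : Set.InjOn (fun s : ℝ => c * s⁻¹) (Set.Ioi 0) := by
      intro s hs t ht h
      have hs0 : (0:ℝ) < s := hs
      have ht0 : (0:ℝ) < t := ht
      field_simp at h
      linarith
    have himg2 : (fun s : ℝ => c * s⁻¹) '' Set.Ioi 0 = Set.Ioi 0 := by
      apply Set.Subset.antisymm
      · rintro _ ⟨s, hs, rfl⟩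
        have hs0 : (0:ℝ) < s := hs
        exact Set.mem_Ioi.mpr (by positivity)
      · intro t ht
        have ht0 : (0:ℝ) < t := ht
        exact ⟨c/t, Set.mem_Ioi.mpr (by positivity), by field_simp⟩
    have key2 := integral_image_eq_integral_abs_deriv_smul measurableSet_Ioi hderiv2 hinj2
      (fun s => Real.exp (-(b*s - a/s)^2 / 2))
    rw [himg2] at key2
    rw [key2]
    apply MeasureTheory.setIntegral_congr_fun measurableSet_Ioi
    intro s hs
    have hs0 : (0:ℝ) < s := hs
    have e1 : |c * (-(s^2)⁻¹)| = c * (s^2)⁻¹ := by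
      rw [abs_of_neg (mul_neg_of_pos_of_neg hc (neg_lt_zero.mpr (by positivity)))]
      ring
    have e2 : b*(c*s⁻¹) - a/(c*s⁻¹) = -(b*s - a/s) := by
      rw [hc_def]; field_simp; ring
    dsimp only
    rw [smul_eq_mul, e1, e2, neg_sq]
  have hsplit : (∫ s in Set.Ioi (0:ℝ), (1 + c * (s^2)⁻¹) * Real.exp (-(b*s - a/s)^2 / 2))
      = (∫ s in Set.Ioi (0:ℝ), Real.exp (-(b*s - a/s)^2 / 2))
        + ∫ s in Set.Ioi (0:ℝ), (c * (s^2)⁻¹) * Real.exp (-(b*s - a/s)^2 / 2) := by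
    rw [← MeasureTheory.integral_add hintf hintf2]
    apply MeasureTheory.setIntegral_congr_fun measurableSet_Ioi
    intro s hs
    ring
  rw [hsplit, hJ2] at key
  have hb' : b ≠ 0 := ne_of_gt hb
  field_simp at key ⊢
  linarith

lemma key_integral (a b : ℝ) (ha : 0 < a) (hb : 0 < b) :
    ∫ r in Set.Ioi (0:ℝ),
        Real.exp (-a^2 / (2*r)) * Real.exp (-(b^2*r) / 2) / Real.sqrt (2*Real.pi*r)
      = Real.exp (-(a*b)) / b := by
  set G : ℝ → ℝ := fun r =>
    Real.exp (-a^2 / (2*r)) * Real.exp (-(b^2*r) / 2) / Real.sqrt (2*Real.pi*r) with hG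
  have hderiv : ∀ s ∈ Set.Ioi (0:ℝ),
      HasDerivWithinAt (fun s : ℝ => s^2) (2*s) (Set.Ioi 0) s := by
    intro s hs
    have := hasDerivAt_pow 2 s
    simpa using this.hasDerivWithinAt
  have hinj : Set.InjOn (fun s : ℝ => s^2) (Set.Ioi 0) := by
    intro s hs t ht h
    simp only at h
    nlinarith [Set.mem_Ioi.mp hs, Set.mem_Ioi.mp ht]
  have himg : (fun s : ℝ => s^2) '' Set.Ioi 0 = Set.Ioi 0 := by
    apply Set.Subset.antisymm
    · rintro _ ⟨s, hs, rfl⟩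
      have := Set.mem_Ioi.mp hs
      exact Set.mem_Ioi.mpr (by positivity)
    · intro r hr
      have hr0 : (0:ℝ) < r := hr
      exact ⟨Real.sqrt r, Set.mem_Ioi.mpr (Real.sqrt_pos.mpr hr0),
        Real.sq_sqrt hr0.le⟩
  have key := integral_image_eq_integral_abs_deriv_smul measurableSet_Ioi hderiv hinj G
  rw [himg] at key
  have hcong : ∀ s ∈ Set.Ioi (0:ℝ),
      |2*s| • G (s^2)
        = (2 * Real.exp (-(a*b)) / Real.sqrt (2*Real.pi))
            * Real.exp (-(b*s - a/s)^2 / 2) := by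
    intro s hs
    have hs0 : (0:ℝ) < s := hs
    have hsq : Real.sqrt (2*Real.pi*s^2) = Real.sqrt (2*Real.pi) * s := by
      rw [Real.sqrt_mul (by positivity), Real.sqrt_sq hs0.le]
    have hexp : Real.exp (-a^2 / (2*s^2)) * Real.exp (-(b^2*s^2) / 2)
        = Real.exp (-(a*b)) * Real.exp (-(b*s - a/s)^2 / 2) := by
      rw [← Real.exp_add, ← Real.exp_add]
      congr 1
      field_simp
      ring
    rw [smul_eq_mul, abs_of_pos (by positivity), hG]
    simp only
    rw [hsq, hexp]
    have h2 : Real.sqrt (2*Real.pi) ≠ 0 := by positivity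
    field_simp
  rw [MeasureTheory.setIntegral_congr_fun measurableSet_Ioi hcong,
    MeasureTheory.integral_const_mul, glasser a b ha hb] at key
  rw [key]
  have h2 : Real.sqrt (2*Real.pi) ≠ 0 := by positivity
  field_simp

theorem stmt_4 (lam z : ℝ) (hlam : 0 < lam) (hz : 0 < z) (y : ℝ) (hy : 0 ≤ y) :
    lam * ∫ r in Set.Ioi (0 : ℝ),
        Real.exp (-(y ^ 2 + 2 * y * z) / (2 * r)) * gaussDensity r z (lam * r) =
      Real.exp (-lam * y) := by
  have ha : 0 < y + z := by linarith
  have hcong : ∀ r ∈ Set.Ioi (0:ℝ),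
      Real.exp (-(y ^ 2 + 2 * y * z) / (2 * r)) * gaussDensity r z (lam * r)
        = Real.exp (lam * z)
            * (Real.exp (-(y+z)^2 / (2*r)) * Real.exp (-(lam^2*r) / 2)
                / Real.sqrt (2*Real.pi*r)) := by
    intro r hr
    have hr0 : (0:ℝ) < r := hr
    unfold gaussDensity
    have he : Real.exp (-(y^2+2*y*z)/(2*r)) * Real.exp (-(z - lam*r)^2/(2*r))
        = Real.exp (lam*z) * (Real.exp (-(y+z)^2/(2*r)) * Real.exp (-(lam^2*r)/2)) := by
      rw [← Real.exp_add, ← Real.exp_add, ← Real.exp_add]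
      congr 1
      field_simp
      ring
    rw [← mul_div_assoc, he, mul_div_assoc]
  rw [MeasureTheory.setIntegral_congr_fun measurableSet_Ioi hcong,
    MeasureTheory.integral_const_mul, key_integral (y+z) lam ha hlam]
  have hl : lam ≠ 0 := ne_of_gt hlam
  rw [show lam * (Real.exp (lam*z) * (Real.exp (-((y+z)*lam)) / lam))
      = Real.exp (lam*z) * Real.exp (-((y+z)*lam)) from by field_simp]
  rw [← Real.exp_add]
  congr 1
  ring
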